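/- arXiv:2006.07075 — 3 statements merged into one kernel-verified Lean document; each statement's English description precedes it below -/
import Mathlib

section
/- Let D, N, W be positive reals and κ, p in (0,1). If D ≥ |log(p)| · W · p^{-W} and N ≤ |log(κ)| · (1-p^W)^{1-D}, then [1 - (1-p^W)^D]^N ≥ κ. -/
/-- Let `D, N, W` be positive reals and `κ, p ∈ (0,1)`. If `D ≥ |log p| ⬝ W ⬝ p^{-W}` and
`N ≤ |log κ| ⬝ (1-p^W)^{1-D}`, then `(1 - (1-p^W)^D)^N ≥ κ`. -/
theorem stmt2 (D N W : ℝ) (hD0 : 0 < D) (hN0 : 0 < N) (hW0 : 0 < W)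
    (κ p : ℝ) (hκ : κ ∈ Set.Ioo (0 : ℝ) 1) (hp : p ∈ Set.Ioo (0 : ℝ) 1)
    (hD : |Real.log p| * W * p ^ (-W) ≤ D)
    (hN : N ≤ |Real.log κ| * (1 - p ^ W) ^ (1 - D)) :
    κ ≤ (1 - (1 - p ^ W) ^ D) ^ N := by
  obtain ⟨hκ0, hκ1⟩ := hκ
  obtain ⟨hp0, hp1⟩ := hp
  set q : ℝ := 1 - p ^ W with hq_def
  have hpW0 : (0 : ℝ) < p ^ W := Real.rpow_pos_of_pos hp0 W
  have hpW1 : p ^ W < 1 := Real.rpow_lt_one hp0.le hp1 hW0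
  have hq0 : 0 < q := by simp [hq_def]; linarith
  have hq1 : q < 1 := by simp [hq_def]; linarith
  have hlogp : Real.log p < 0 := Real.log_neg hp0 hp1
  have habs_p : |Real.log p| = -Real.log p := abs_of_neg hlogp
  have hlogκ : Real.log κ < 0 := Real.log_neg hκ0 hκ1
  have habs_κ : |Real.log κ| = -Real.log κ := abs_of_neg hlogκ
  have hlogq : Real.log q < 0 := Real.log_neg hq0 hq1
  -- Step 1 : q ^ D ≤ 1 - q
  have hqD0 : 0 < q ^ D := Real.rpow_pos_of_pos hq0 D
  have hlogq_le : Real.log q ≤ -(p ^ W) := by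
    have := Real.log_le_sub_one_of_pos hq0
    simpa [hq_def] using this
  have hDlogq : D * Real.log q ≤ Real.log (1 - q) := by
    have h1 : D * Real.log q ≤ (|Real.log p| * W * p ^ (-W)) * Real.log q :=
      mul_le_mul_of_nonpos_right hD hlogq.le
    have h2 : (|Real.log p| * W * p ^ (-W)) * Real.log q
        ≤ (|Real.log p| * W * p ^ (-W)) * (-(p ^ W)) := by
      apply mul_le_mul_of_nonneg_left hlogq_le
      positivity
    have h3 : (|Real.log p| * W * p ^ (-W)) * (-(p ^ W)) = W * Real.log p := by
      rw [habs_p]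
      have hmul : p ^ (-W) * p ^ W = 1 := by
        rw [← Real.rpow_add hp0]; simp
      linear_combination (Real.log p * W) * hmul
    have h4 : Real.log (1 - q) = W * Real.log p := by
      rw [hq_def]; simp [Real.log_rpow hp0]
    linarith
  have hqD_le : q ^ D ≤ 1 - q := by
    have : q ^ D = Real.exp (D * Real.log q) := by
      rw [Real.rpow_def_of_pos hq0, mul_comm]
    rw [this]
    calc Real.exp (D * Real.log q) ≤ Real.exp (Real.log (1 - q)) :=
          Real.exp_le_exp.2 hDlogq
      _ = 1 - q := Real.exp_log (by linarith)
  have h1qD : 0 < 1 - q ^ D := by linarith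
  -- Step 2 : -log (1 - q^D) ≤ q^D / (1 - q^D) ≤ q^(D-1)
  have hneglog : -Real.log (1 - q ^ D) ≤ q ^ D / (1 - q ^ D) := by
    have h := Real.log_le_sub_one_of_pos (show (0:ℝ) < (1 - q ^ D)⁻¹ by positivity)
    rw [Real.log_inv] at h
    have : (1 - q ^ D)⁻¹ - 1 = q ^ D / (1 - q ^ D) := by
      field_simp
      ring
    linarith
  have hdiv : q ^ D / (1 - q ^ D) ≤ q ^ (D - 1) := by
    have h1 : q ^ (D - 1) = q ^ D / q := by
      rw [Real.rpow_sub hq0]; simp [Real.rpow_one]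
    rw [h1]
    apply div_le_div_of_nonneg_left hqD0.le hq0
    linarith
  -- Step 3 : N * q^(D-1) ≤ -log κ
  have hNq : N * q ^ (D - 1) ≤ -Real.log κ := by
    have hqD1 : (0:ℝ) < q ^ (D - 1) := Real.rpow_pos_of_pos hq0 _
    rw [habs_κ] at hN
    have h1 : N * q ^ (D - 1) ≤ (-Real.log κ * q ^ (1 - D)) * q ^ (D - 1) :=
      mul_le_mul_of_nonneg_right hN hqD1.le
    have h2 : (-Real.log κ * q ^ (1 - D)) * q ^ (D - 1) = -Real.log κ := by
      rw [mul_assoc, ← Real.rpow_add hq0]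
      norm_num
    linarith
  -- Conclusion
  have hfinal : Real.log κ ≤ N * Real.log (1 - q ^ D) := by
    have h1 : N * (-Real.log (1 - q ^ D)) ≤ N * (q ^ D / (1 - q ^ D)) :=
      mul_le_mul_of_nonneg_left hneglog hN0.le
    have h2 : N * (q ^ D / (1 - q ^ D)) ≤ N * q ^ (D - 1) :=
      mul_le_mul_of_nonneg_left hdiv hN0.le
    nlinarith
  calc κ = Real.exp (Real.log κ) := (Real.exp_log hκ0).symm
    _ ≤ Real.exp (N * Real.log (1 - q ^ D)) := Real.exp_le_exp.2 hfinal
    _ = (1 - q ^ D) ^ N := by rw [Real.rpow_def_of_pos h1qD, mul_comm]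
end

section
/- Let a = (a_0,...,a_D) be a network architecture with D ≥ 3 hidden structure, let θ, ϑ be two parameter vectors, and let j be an index with 1 < j < D. Suppose all weights and biases of layer j of θ are strictly negative, all weights and biases of layer j of ϑ are strictly negative, and θ and ϑ agree on all entries corresponding to layers j+1 through D. Then the ReLU realization functions satisfy N_a^θ(0) = N_a^θ(x) = N_a^ϑ(x) = N_a^ϑ(0) for every input x in R^{a_0}. -/
open MeasureTheory ProbabilityTheory

noncomputable section

/-- `layerSum a j = ∑_{i=1}^{j} a_i (a_{i-1}+1)`, the number of parameters in layers `1,…,j`. -/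
def layerSum (a : ℕ → ℕ) (j : ℕ) : ℕ := ∑ i ∈ Finset.Icc 1 j, a i * (a (i - 1) + 1)

/-- The affine map of a layer with `m` outputs, `n` inputs, parameters read from `θ`
starting at offset `k` (weights row-wise, then biases). -/
def affApply (m n : ℕ) (θ : ℕ → ℝ) (k : ℕ) (y : Fin n → ℝ) : Fin m → ℝ :=
  fun i => (∑ l : Fin n, θ (k + i.val * n + l.val) * y l) + θ (k + m * n + i.val)

/-- Forward pass through the first `j` layers of the network, with componentwise ReLU
applied after each affine layer. -/
def fwd (a : ℕ → ℕ) (θ : ℕ → ℝ) (x : Fin (a 0) → ℝ) : (j : ℕ) → Fin (a j) → ℝ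
  | 0 => x
  | j + 1 => fun i => max (affApply (a (j + 1)) (a j) θ (layerSum a j) (fwd a θ x j) i) 0

/-- The realization `N_a^θ : ℝ^{a 0} → ℝ^{a D}` of the fully connected feedforward ReLU
network with architecture `a = (a 0, …, a D)` and parameters `θ`:
ReLU after each of the hidden layers `1,…,D-1`, linear read-out layer `D`. -/
def realization (a : ℕ → ℕ) (D : ℕ) (θ : ℕ → ℝ) (x : Fin (a 0) → ℝ) : Fin (a D) → ℝ :=
  affApply (a D) (a (D - 1)) θ (layerSum a (D - 1)) (fwd a θ x (D - 1))

/-- All weights and biases of layer `j` (the parameter block with indices in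
`[layerSum a (j-1), layerSum a j)`) are strictly negative. -/
def layerNeg (a : ℕ → ℕ) (j : ℕ) (θ : ℕ → ℝ) : Prop :=
  ∀ i, layerSum a (j - 1) ≤ i → i < layerSum a j → θ i < 0

/-- The inactive set `I_a`: some hidden layer `j` with `1 < j < D` has all its weights and
biases strictly negative. -/
def Inactive (a : ℕ → ℕ) (D : ℕ) (θ : ℕ → ℝ) : Prop :=
  ∃ j, 1 < j ∧ j < D ∧ layerNeg a j θ

end

lemma layerSum_succ' (a : ℕ → ℕ) (k : ℕ) :
    layerSum a (k + 1) = layerSum a k + a (k + 1) * (a k + 1) := by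
  unfold layerSum
  rw [Finset.sum_Icc_succ_top (by omega : 1 ≤ k + 1)]
  simp

lemma layerSum_mono (a : ℕ → ℕ) {i k : ℕ} (h : i ≤ k) : layerSum a i ≤ layerSum a k := by
  unfold layerSum
  exact Finset.sum_le_sum_of_subset (Finset.Icc_subset_Icc_right h)

lemma idx_lt (m n : ℕ) (i : Fin m) (l : Fin n) : i.val * n + l.val < m * n := by
  have h1 : i.val + 1 ≤ m := i.isLt
  have h2 : l.val < n := l.isLt
  calc i.val * n + l.val < i.val * n + n := by omega
    _ = (i.val + 1) * n := by ring
    _ ≤ m * n := Nat.mul_le_mul_right n h1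

lemma affApply_congr (m n : ℕ) (θ ϑ : ℕ → ℝ) (k : ℕ) (y y' : Fin n → ℝ)
    (hθ : ∀ i, k ≤ i → i < k + m * (n + 1) → θ i = ϑ i) (hy : y = y') :
    affApply m n θ k y = affApply m n ϑ k y' := by
  subst hy
  funext i
  unfold affApply
  have hsucc : m * (n + 1) = m * n + m := Nat.mul_succ m n
  congr 1
  · refine Finset.sum_congr rfl fun l _ => ?_
    have := idx_lt m n i l
    rw [hθ _ (by omega) (by omega)]
  · exact hθ _ (by omega) (by omega)

lemma fwd_nonneg (a : ℕ → ℕ) (θ : ℕ → ℝ) (x : Fin (a 0) → ℝ) (k : ℕ) (hk : 1 ≤ k)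
    (i : Fin (a k)) : 0 ≤ fwd a θ x k i := by
  obtain ⟨k', rfl⟩ : ∃ k', k = k' + 1 := ⟨k - 1, by omega⟩
  exact le_max_right _ _

lemma fwd_layerNeg (a : ℕ → ℕ) (j : ℕ) (hj : 2 ≤ j) (θ : ℕ → ℝ) (h : layerNeg a j θ)
    (x : Fin (a 0) → ℝ) : fwd a θ x j = fun _ => 0 := by
  obtain ⟨j', rfl⟩ : ∃ j', j = j' + 1 := ⟨j - 1, by omega⟩
  funext i
  show max (affApply (a (j' + 1)) (a j') θ (layerSum a j') (fwd a θ x j') i) 0 = 0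
  apply max_eq_right
  have hub : layerSum a (j' + 1) = layerSum a j' + a (j' + 1) * (a j' + 1) :=
    layerSum_succ' a j'
  have hsucc : a (j' + 1) * (a j' + 1) = a (j' + 1) * a j' + a (j' + 1) :=
    Nat.mul_succ _ _
  have hneg : ∀ p, layerSum a j' ≤ p →
      p < layerSum a j' + a (j' + 1) * (a j' + 1) → θ p < 0 := by
    intro p hp1 hp2
    exact h p (by simpa using hp1) (by omega)
  unfold affApply
  have hsum : (∑ l : Fin (a j'),
      θ (layerSum a j' + i.val * a j' + l.val) * fwd a θ x j' l) ≤ 0 := by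
    apply Finset.sum_nonpos
    intro l _
    have := idx_lt (a (j' + 1)) (a j') i l
    have hθn : θ (layerSum a j' + i.val * a j' + l.val) < 0 :=
      hneg _ (by omega) (by omega)
    have hy : 0 ≤ fwd a θ x j' l := fwd_nonneg a θ x j' (by omega) l
    exact mul_nonpos_of_nonpos_of_nonneg hθn.le hy
  have hb : θ (layerSum a j' + a (j' + 1) * a j' + i.val) < 0 :=
    hneg _ (by omega) (by omega)
  linarith

lemma fwd_congr (a : ℕ → ℕ) (D j : ℕ) (θ ϑ : ℕ → ℝ) (x x' : Fin (a 0) → ℝ)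
    (hagree : ∀ i, layerSum a j ≤ i → i < layerSum a D → θ i = ϑ i)
    (h0 : fwd a θ x j = fwd a ϑ x' j) :
    ∀ k, j ≤ k → k ≤ D → fwd a θ x k = fwd a ϑ x' k := by
  intro k
  induction k with
  | zero =>
    intro h1 _
    have : j = 0 := by omega
    subst this
    exact h0
  | succ k ih =>
    intro hjk hkD
    rcases Nat.lt_or_ge j (k + 1) with hlt | hge
    · have hk : j ≤ k := by omega
      have hrec := ih hk (by omega)
      funext i
      show max (affApply (a (k + 1)) (a k) θ (layerSum a k) (fwd a θ x k) i) 0 = _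
      have hub : layerSum a (k + 1) = layerSum a k + a (k + 1) * (a k + 1) :=
        layerSum_succ' a k
      have haff : affApply (a (k + 1)) (a k) θ (layerSum a k) (fwd a θ x k) =
          affApply (a (k + 1)) (a k) ϑ (layerSum a k) (fwd a ϑ x' k) := by
        apply affApply_congr
        · intro p hp1 hp2
          apply hagree
          · exact le_trans (layerSum_mono a hk) hp1
          · exact lt_of_lt_of_le (by omega) (layerSum_mono a hkD)
        · exact hrec
      rw [haff]; rfl
    · have : j = k + 1 := by omega
      subst this
      exact h0

lemma realization_congr (a : ℕ → ℕ) (D j : ℕ) (hj : j ≤ D - 1) (hD : 1 ≤ D)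
    (θ ϑ : ℕ → ℝ) (x x' : Fin (a 0) → ℝ)
    (hagree : ∀ i, layerSum a j ≤ i → i < layerSum a D → θ i = ϑ i)
    (h0 : fwd a θ x j = fwd a ϑ x' j) :
    realization a D θ x = realization a D ϑ x' := by
  unfold realization
  have hfwd := fwd_congr a D j θ ϑ x x' hagree h0 (D - 1) hj (by omega)
  have hub : layerSum a D = layerSum a (D - 1) + a D * (a (D - 1) + 1) := by
    have := layerSum_succ' a (D - 1)
    rw [show D - 1 + 1 = D by omega] at this
    exact this
  apply affApply_congr
  · intro p hp1 hp2
    apply hagree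
    · exact le_trans (layerSum_mono a hj) hp1
    · omega
  · exact hfwd

/-- If all weights and biases of layer `j` (with `1 < j < D`) of both `θ` and `ϑ` are
strictly negative, and `θ` and `ϑ` agree on all entries corresponding to layers `j+1,…,D`,
then `N_a^θ(0) = N_a^θ(x) = N_a^ϑ(x) = N_a^ϑ(0)` for every input `x`. -/
theorem stmt4 (a : ℕ → ℕ) (D : ℕ) (hD : 3 ≤ D) (hpos : ∀ i, i ≤ D → 0 < a i)
    (j : ℕ) (hj1 : 1 < j) (hjD : j < D) (θ ϑ : ℕ → ℝ)
    (hθ : layerNeg a j θ) (hϑ : layerNeg a j ϑ)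
    (hagree : ∀ i, layerSum a j ≤ i → i < layerSum a D → θ i = ϑ i)
    (x : Fin (a 0) → ℝ) :
    realization a D θ (fun _ => 0) = realization a D θ x ∧
    realization a D θ x = realization a D ϑ x ∧
    realization a D ϑ x = realization a D ϑ (fun _ => 0) := by
  have hj2 : 2 ≤ j := hj1
  have hjD1 : j ≤ D - 1 := by omega
  have hD1 : 1 ≤ D := by omega
  have hθx := fwd_layerNeg a j hj2 θ hθ x
  have hθ0 := fwd_layerNeg a j hj2 θ hθ (fun _ => 0)
  have hϑx := fwd_layerNeg a j hj2 ϑ hϑ x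
  have hϑ0 := fwd_layerNeg a j hj2 ϑ hϑ (fun _ => 0)
  refine ⟨?_, ?_, ?_⟩
  · exact realization_congr a D j hjD1 hD1 θ θ (fun _ => 0) x
      (fun _ _ _ => rfl) (hθ0.trans hθx.symm)
  · exact realization_congr a D j hjD1 hD1 θ ϑ x x hagree (hθx.trans hϑx.symm)
  · exact realization_congr a D j hjD1 hD1 ϑ ϑ x (fun _ => 0)
      (fun _ _ _ => rfl) (hϑx.trans hϑ0.symm)
end

section
/- If each coordinate of the random initialization Θ^1_0 ∈ R^{P(a)} is uniformly distributed on [-c,c] for some c > 0, then inf_{i} P(Θ^1_{0,i} < 0) = 1/2, and consequently (with D ≥ 3, W = max hidden width, N i.i.d. initializations, and gradient descent preserving inactivity) the probability that all N trajectories remain forever in the inactive set is at least [1 - (1 - 2^{-W(W+1)})^{D-2}]^N. -/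
open MeasureTheory ProbabilityTheory

namespace Aux

lemma layerSum_succ (a : ℕ → ℕ) (j : ℕ) :
    layerSum a (j + 1) = layerSum a j + a (j + 1) * (a j + 1) := by
  unfold layerSum
  rw [Finset.sum_Icc_succ_top (by omega : 1 ≤ j + 1)]
  simp

lemma layerSum_mono (a : ℕ → ℕ) : Monotone (layerSum a) := by
  apply monotone_nat_of_le_succ
  intro j
  rw [layerSum_succ]
  omega

/-- index bound for a weight of layer j+1 -/
lemma weight_idx_lt (a : ℕ → ℕ) (j : ℕ) (i : Fin (a (j+1))) (l : Fin (a j)) :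
    layerSum a j + i.val * a j + l.val < layerSum a (j+1) := by
  rw [layerSum_succ]
  have h1 : i.val * a j + l.val < (i.val + 1) * a j := by
    have := l.isLt; nlinarith [l.isLt]
  have h2 : (i.val + 1) * a j ≤ a (j+1) * a j := Nat.mul_le_mul_right _ i.isLt
  nlinarith [i.isLt]

lemma bias_idx_lt (a : ℕ → ℕ) (j : ℕ) (i : Fin (a (j+1))) :
    layerSum a j + a (j+1) * a j + i.val < layerSum a (j+1) := by
  rw [layerSum_succ]
  have := i.isLt
  nlinarith

lemma fwd_congr (a : ℕ → ℕ) (θ θ' : ℕ → ℝ) (x : Fin (a 0) → ℝ) (j : ℕ)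
    (h : ∀ i < layerSum a j, θ i = θ' i) : fwd a θ x j = fwd a θ' x j := by
  induction j with
  | zero => rfl
  | succ j ih =>
    have hmono := layerSum_mono a (Nat.le_succ j)
    have ih' := ih (fun i hi => h i (lt_of_lt_of_le hi hmono))
    funext i
    show max (affApply (a (j + 1)) (a j) θ (layerSum a j) (fwd a θ x j) i) 0 = _
    rw [ih']
    unfold affApply
    congr 2
    · exact Finset.sum_congr rfl fun l _ => by
        rw [h _ (weight_idx_lt a j i l)]
    · exact h _ (bias_idx_lt a j i)

lemma fwd_nonneg (a : ℕ → ℕ) (θ : ℕ → ℝ) (x : Fin (a 0) → ℝ) (j : ℕ) (hj : 1 ≤ j)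
    (i : Fin (a j)) : 0 ≤ fwd a θ x j i := by
  obtain ⟨k, rfl⟩ : ∃ k, j = k + 1 := ⟨j - 1, by omega⟩
  exact le_max_right _ _

lemma fwd_layerNeg_zero (a : ℕ → ℕ) (θ : ℕ → ℝ) (x : Fin (a 0) → ℝ) (j : ℕ) (hj : 2 ≤ j)
    (hneg : layerNeg a j θ) : fwd a θ x j = 0 := by
  obtain ⟨k, rfl⟩ : ∃ k, j = k + 1 := ⟨j - 1, by omega⟩
  have hk : 1 ≤ k := by omega
  funext i
  show max (affApply (a (k + 1)) (a k) θ (layerSum a k) (fwd a θ x k) i) 0 = 0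
  have hj' : (k + 1) - 1 = k := rfl
  apply max_eq_right
  apply le_of_lt
  unfold affApply
  have hb : θ (layerSum a k + a (k+1) * a k + i.val) < 0 := by
    apply hneg _ (by rw [hj']; omega) (bias_idx_lt a k i)
  have hs : (∑ l : Fin (a k), θ (layerSum a k + i.val * a k + l.val) * fwd a θ x k l) ≤ 0 := by
    apply Finset.sum_nonpos
    intro l _
    apply mul_nonpos_of_nonpos_of_nonneg
    · exact le_of_lt (hneg _ (by rw [hj']; omega) (weight_idx_lt a k i l))
    · exact fwd_nonneg a θ x k hk l
  linarith

lemma realization_eq (a : ℕ → ℕ) (D : ℕ) (hD : 3 ≤ D) (θ θ' : ℕ → ℝ) (j : ℕ)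
    (hj2 : 2 ≤ j) (hjD : j ≤ D - 1) (hθ : layerNeg a j θ) (hθ' : layerNeg a j θ')
    (hag : ∀ i, layerSum a j ≤ i → θ i = θ' i) (x : Fin (a 0) → ℝ) :
    realization a D θ x = realization a D θ' x := by
  have key : ∀ k, j ≤ k → fwd a θ x k = fwd a θ' x k := by
    intro k hk
    induction k, hk using Nat.le_induction with
    | base =>
      rw [fwd_layerNeg_zero a θ x j hj2 hθ, fwd_layerNeg_zero a θ' x j hj2 hθ']
    | succ k hk ih =>
      funext i
      show max (affApply (a (k + 1)) (a k) θ (layerSum a k) (fwd a θ x k) i) 0 = _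
      rw [ih]
      unfold affApply
      have hls : layerSum a j ≤ layerSum a k := layerSum_mono a hk
      congr 2
      · exact Finset.sum_congr rfl fun l _ => by rw [hag _ (by omega)]
      · exact hag _ (by omega)
  unfold realization
  rw [key (D - 1) hjD]
  have hls : layerSum a j ≤ layerSum a (D - 1) := layerSum_mono a hjD
  unfold affApply
  funext i
  congr 1
  · exact Finset.sum_congr rfl fun l _ => by rw [hag _ (by omega)]
  · exact hag _ (by omega)

end Aux

/-- If each coordinate of the random initialization is uniformly distributed on `[-c,c]`,
then `inf_i P(Θ¹₀ᵢ < 0) = 1/2`, and the probability that all `N` gradient descent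
trajectories remain forever in the inactive set is at least
`(1 - (1 - 2^{-W(W+1)})^{D-2})^N`. -/
theorem stmt11 {Ω : Type*} [MeasurableSpace Ω] (μ : Measure Ω) [IsProbabilityMeasure μ]
    (a : ℕ → ℕ) (D : ℕ) (hD : 3 ≤ D) (hpos : ∀ i, i ≤ D → 0 < a i) (haD : a D = 1)
    (N : ℕ) (hN : 1 ≤ N) (𝔠 : ℝ → ℝ) (h𝔠 : Continuous 𝔠)
    -- the empirical loss functionals, the losses on parameter space, and the gradients
    (F : ℕ → ℕ → Ω → ((Fin (a 0) → ℝ) → ℝ))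
    (L : ℕ → ℕ → (ℕ → ℝ) → Ω → ℝ)
    (hL : ∀ n t θ ω, L n t θ ω = F n t ω (fun x => 𝔠 (realization a D θ x ⟨0, by omega⟩)))
    (G : ℕ → ℕ → (ℕ → ℝ) → Ω → ℕ → ℝ)
    (hG : ∀ n t (θ : ℕ → ℝ) (ω : Ω) (i : ℕ),
      DifferentiableAt ℝ (fun s => L n t (Function.update θ i s) ω) (θ i) →
      G n t θ ω i = deriv (fun s => L n t (Function.update θ i s) ω) (θ i))
    -- the SGD trajectories
    (γ : ℕ → ℝ) (Θ : ℕ → ℕ → Ω → ℕ → ℝ)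
    (hΘ : ∀ n t ω i, Θ n (t + 1) ω i = Θ n t ω i - γ (t + 1) * G n (t + 1) (Θ n t ω) ω i)
    -- the initializations are i.i.d. with independent coordinates
    (hmeas : ∀ n, Measurable (Θ n 0))
    (hindep : iIndepFun
      (fun (n : Fin N) ω => Θ (n.val + 1) 0 ω) μ)
    (hident : ∀ n, 1 ≤ n → n ≤ N → IdentDistrib (Θ n 0) (Θ 1 0) μ μ)
    (hcoord : iIndepFun
      (fun (i : Fin (layerSum a D)) ω => Θ 1 0 ω i.val) μ)
    -- each coordinate of the initialization is uniformly distributed on `[-c,c]`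
    (c : ℝ) (hc : 0 < c)
    (hunif : ∀ i : ℕ, Measure.map (fun ω => Θ 1 0 ω i) μ =
      (ENNReal.ofReal (2 * c))⁻¹ • MeasureTheory.volume.restrict (Set.Icc (-c) c))
    (W : ℕ) (hW : W = (Finset.Icc 1 (D - 1)).sup a) :
    (⨅ i : Fin (layerSum a D), (μ {ω | Θ 1 0 ω i.val < 0}).toReal) = 1 / 2 ∧
    ENNReal.ofReal ((1 - (1 - (1 / 2 : ℝ) ^ (W * (W + 1))) ^ (D - 2)) ^ N) ≤
      μ {ω | ∀ n, 1 ≤ n → n ≤ N → ∀ t, Inactive a D (Θ n t ω)} := by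
  
  classical
  have hMpos : 0 < layerSum a D := by
    obtain ⟨E, rfl⟩ : ∃ E, D = E + 1 := ⟨D - 1, by omega⟩
    rw [Aux.layerSum_succ]
    have := hpos (E + 1) le_rfl
    positivity
  -- single coordinate probability
  have hhalf : ∀ i : ℕ, μ {ω | Θ 1 0 ω i < 0} = 2⁻¹ := by
    intro i
    have hm : Measurable fun ω => Θ 1 0 ω i := (measurable_pi_apply i).comp (hmeas 1)
    have hpre : {ω | Θ 1 0 ω i < 0} = (fun ω => Θ 1 0 ω i) ⁻¹' (Set.Iio 0) := rfl
    rw [hpre, ← Measure.map_apply hm measurableSet_Iio, hunif i]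
    simp only [Measure.smul_apply, smul_eq_mul]
    rw [Measure.restrict_apply measurableSet_Iio]
    have hset : Set.Iio (0:ℝ) ∩ Set.Icc (-c) c = Set.Ico (-c) 0 := by
      ext y
      simp only [Set.mem_inter_iff, Set.mem_Iio, Set.mem_Icc, Set.mem_Ico]
      constructor
      · rintro ⟨h1, h2, h3⟩; exact ⟨h2, h1⟩
      · rintro ⟨h1, h2⟩; exact ⟨h2, h1, by linarith⟩
    rw [hset, Real.volume_Ico]
    rw [show (0:ℝ) - -c = c by ring]
    rw [show (2:ℝ) * c = 2 * c from rfl, ENNReal.ofReal_mul (by norm_num : (0:ℝ) ≤ 2)]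
    have hc0 : ENNReal.ofReal c ≠ 0 := (ENNReal.ofReal_pos.mpr hc).ne'
    have hctop : ENNReal.ofReal c ≠ ⊤ := ENNReal.ofReal_ne_top
    rw [ENNReal.mul_inv (Or.inr hctop) (Or.inr hc0), mul_assoc,
      ENNReal.inv_mul_cancel hc0 hctop, mul_one]
    norm_num
  have part1 : (⨅ i : Fin (layerSum a D), (μ {ω | Θ 1 0 ω i.val < 0}).toReal) = 1 / 2 := by
    have : ∀ i : Fin (layerSum a D), (μ {ω | Θ 1 0 ω i.val < 0}).toReal = 1 / 2 := by
      intro i; rw [hhalf]; norm_num [ENNReal.toReal_inv]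
    have hne : Nonempty (Fin (layerSum a D)) := ⟨⟨0, hMpos⟩⟩
    calc (⨅ i : Fin (layerSum a D), (μ {ω | Θ 1 0 ω i.val < 0}).toReal)
        = ⨅ _ : Fin (layerSum a D), (1/2 : ℝ) := by
          congr 1; funext i; exact this i
      _ = 1 / 2 := ciInf_const
  refine ⟨part1, ?_⟩
  -- preservation of layer negativity under gradient descent
  have preserve : ∀ n t ω j, 1 < j → j < D → layerNeg a j (Θ n t ω) →
      layerNeg a j (Θ n (t+1) ω) := by
    intro n t ω j hj1 hjD hneg i h1 h2
    have hθi : Θ n t ω i < 0 := hneg i h1 h2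
    have hG0 : G n (t+1) (Θ n t ω) ω i = 0 := by
      set θ := Θ n t ω with hθdef
      have hconst : ∀ s : ℝ, s < 0 → L n (t+1) (Function.update θ i s) ω = L n (t+1) θ ω := by
        intro s hs
        rw [hL, hL]
        congr 1
        funext x
        congr 1
        have hneg' : layerNeg a j (Function.update θ i s) := by
          intro i' h1' h2'
          rw [Function.update_apply]
          split_ifs with h
          · exact hs
          · exact hneg i' h1' h2'
        have hag : ∀ i', layerSum a j ≤ i' → Function.update θ i s i' = θ i' := by
          intro i' hi'
          exact Function.update_of_ne (show i' ≠ i by omega) s θ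
        exact congrFun (Aux.realization_eq a D hD (Function.update θ i s) θ j
          (by omega) (by omega) hneg' hneg hag x) _
      have hmem : Set.Iio (0:ℝ) ∈ nhds (θ i) := Iio_mem_nhds hθi
      have heq : (fun s => L n (t+1) (Function.update θ i s) ω)
          =ᶠ[nhds (θ i)] (fun _ => L n (t+1) θ ω) :=
        Filter.eventuallyEq_of_mem hmem (fun s hs => hconst s hs)
      have hdiff : DifferentiableAt ℝ (fun s => L n (t+1) (Function.update θ i s) ω) (θ i) :=
        (differentiableAt_const _).congr_of_eventuallyEq heq
      rw [hG n (t+1) θ ω i hdiff, heq.deriv_eq, deriv_const]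
    rw [hΘ, hG0, mul_zero, sub_zero]
    exact hθi
  have preserveAll : ∀ n ω, Inactive a D (Θ n 0 ω) → ∀ t, Inactive a D (Θ n t ω) := by
    intro n ω ⟨j, hj1, hjD, hneg⟩ t
    refine ⟨j, hj1, hjD, ?_⟩
    induction t with
    | zero => exact hneg
    | succ t ih => exact preserve n t ω j hj1 hjD ih
  -- coordinate functions and blocks
  set M := layerSum a D with hM
  let f : Fin M → Ω → ℝ := fun i ω => Θ 1 0 ω i.val
  have hfmeas : ∀ i, Measurable (f i) := fun i => (measurable_pi_apply i.val).comp (hmeas 1)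
  have hIcoSub : ∀ j, j ≤ D → ∀ m ∈ Finset.Ico (layerSum a (j-1)) (layerSum a j), m < M := by
    intro j hj m hm
    have := (Finset.mem_Ico.mp hm).2
    exact lt_of_lt_of_le this (Aux.layerSum_mono a hj)
  let T : ℕ → Finset (Fin M) := fun j =>
    ((Finset.Ico (layerSum a (j-1)) (layerSum a j)) ∩ Finset.range M).attachFin
      (fun m hm => Finset.mem_range.mp (Finset.mem_inter.mp hm).2)
  have hTmem : ∀ j (i : Fin M), i ∈ T j ↔
      (layerSum a (j-1) ≤ i.val ∧ i.val < layerSum a j) := by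
    intro j i
    simp [T, Finset.mem_attachFin, Finset.mem_inter, Finset.mem_Ico, Finset.mem_range, i.isLt]
  have hTcard : ∀ j, 1 ≤ j → j ≤ D → (T j).card = a j * (a (j-1) + 1) := by
    intro j h1 hj
    have hsub : Finset.Ico (layerSum a (j-1)) (layerSum a j) ∩ Finset.range M
        = Finset.Ico (layerSum a (j-1)) (layerSum a j) :=
      Finset.inter_eq_left.mpr (fun m hm => Finset.mem_range.mpr (hIcoSub j hj m hm))
    show (Finset.attachFin _ _).card = _
    rw [Finset.card_attachFin, hsub, Nat.card_Ico]
    obtain ⟨k, rfl⟩ : ∃ k, j = k + 1 := ⟨j - 1, by omega⟩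
    rw [Aux.layerSum_succ]
    simp
  -- the layer events
  let A : ℕ → Set Ω := fun j => {ω | layerNeg a j (Θ 1 0 ω)}
  have hAeq : ∀ j, j ≤ D → A j = ⋂ i ∈ T j, f i ⁻¹' Set.Iio 0 := by
    intro j hj
    ext ω
    simp only [A, Set.mem_setOf_eq, Set.mem_iInter, Set.mem_preimage, Set.mem_Iio]
    constructor
    · intro h i hi
      exact h i.val ((hTmem j i).mp hi).1 ((hTmem j i).mp hi).2
    · intro h i h1 h2
      have hiM : i < M := lt_of_lt_of_le h2 (Aux.layerSum_mono a hj)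
      exact h ⟨i, hiM⟩ ((hTmem j ⟨i, hiM⟩).mpr ⟨h1, h2⟩)
  have hAmeas : ∀ j, j ≤ D → MeasurableSet (A j) := by
    intro j hj
    rw [hAeq j hj]
    exact MeasurableSet.biInter (T j).countable_toSet
      (fun i _ => hfmeas i measurableSet_Iio)
  have hAprob : ∀ j, j ≤ D → μ (A j) = 2⁻¹ ^ (T j).card := by
    intro j hj
    rw [hAeq j hj]
    rw [hcoord.measure_inter_preimage_eq_mul (T j)
      (sets := fun _ => Set.Iio 0) (fun i _ => measurableSet_Iio)]
    rw [Finset.prod_congr rfl (fun i _ => hhalf i.val), Finset.prod_const]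
  have hAlow : ∀ j, 2 ≤ j → j ≤ D - 1 → (2⁻¹ : ENNReal) ^ (W * (W + 1)) ≤ μ (A j) := by
    intro j h2 hj
    rw [hAprob j (by omega), hTcard j (by omega) (by omega)]
    apply pow_le_pow_of_le_one zero_le (by simp) -- 2⁻¹ ≤ 1
    have haj : a j ≤ W := hW ▸ Finset.le_sup (Finset.mem_Icc.mpr ⟨by omega, hj⟩)
    have haj' : a (j-1) ≤ W := hW ▸ Finset.le_sup (Finset.mem_Icc.mpr ⟨by omega, by omega⟩)
    exact Nat.mul_le_mul haj (by omega)
  -- disjointness of blocks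
  have hTdisj : ∀ j j' : ℕ, j < j' → Disjoint (T j) (T j') := by
    intro j j' hjj'
    rw [Finset.disjoint_left]
    intro i hi hi'
    have h1 := (hTmem j i).mp hi
    have h2 := (hTmem j' i).mp hi'
    have hmono : layerSum a j ≤ layerSum a (j' - 1) := Aux.layerSum_mono a (by omega)
    omega
  -- the independence product over layers
  have key : ∀ J' : Finset ℕ, J' ⊆ Finset.Ioo 1 D →
      μ (⋂ j ∈ J', (A j)ᶜ) = ∏ j ∈ J', (1 - μ (A j)) := by
    intro J'
    induction J' using Finset.induction_on with
    | empty => intro _; simp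
    | @insert k J' hk ih =>
      intro hsub
      have hkJ := Finset.mem_Ioo.mp (hsub (Finset.mem_insert_self k J'))
      have hsub' : J' ⊆ Finset.Ioo 1 D := fun x hx => hsub (Finset.mem_insert_of_mem hx)
      set S : Finset (Fin M) := J'.biUnion T with hS
      have hdisj : Disjoint (T k) S := by
        rw [hS, Finset.disjoint_biUnion_right]
        intro j hj
        have hne : j ≠ k := fun h => hk (h ▸ hj)
        rcases lt_or_gt_of_ne hne with h | h
        · exact (hTdisj j k h).symm
        · exact hTdisj k j h
      have hIF := hcoord.indepFun_finset (T k) S hdisj hfmeas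
      set Cset : Set ({x // x ∈ T k} → ℝ) := {y | ∀ i, y i < 0} with hCset
      have hCmeas : MeasurableSet Cset := by
        have : Cset = ⋂ i, (fun y : {x // x ∈ T k} → ℝ => y i) ⁻¹' Set.Iio 0 := by
          ext y; simp [hCset]
        rw [this]
        exact MeasurableSet.iInter fun i => measurable_pi_apply i measurableSet_Iio
      have hAk : A k = (fun ω (i : {x // x ∈ T k}) => f i.val ω) ⁻¹' Cset := by
        ext ω
        simp only [Set.mem_preimage, hCset, Set.mem_setOf_eq, A]
        constructor
        · rintro h ⟨i, hi⟩
          exact h i.val ((hTmem k i).mp hi).1 ((hTmem k i).mp hi).2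
        · intro h i h1 h2
          have hiM : i < M := lt_of_lt_of_le h2 (Aux.layerSum_mono a (by omega))
          exact h ⟨⟨i, hiM⟩, (hTmem k _).mpr ⟨h1, h2⟩⟩
      set B : ℕ → Set ({x // x ∈ S} → ℝ) := fun j =>
        {y | ∀ i : {x // x ∈ S}, (layerSum a (j-1) ≤ (i.val : Fin M).val ∧
          (i.val : Fin M).val < layerSum a j) → y i < 0} with hB
      have hBmeas : ∀ j, MeasurableSet (B j) := by
        intro j
        have : B j = ⋂ (i : {x // x ∈ S}), ⋂ (_ : layerSum a (j-1) ≤ (i.val : Fin M).val ∧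
            (i.val : Fin M).val < layerSum a j), (fun y : {x // x ∈ S} → ℝ => y i) ⁻¹' Set.Iio 0 := by
          ext y; simp [hB]
        rw [this]
        exact MeasurableSet.iInter fun i => MeasurableSet.iInter fun _ =>
          measurable_pi_apply i measurableSet_Iio
      have hBpre : ∀ j ∈ J', (fun ω (i : {x // x ∈ S}) => f i.val ω) ⁻¹' (B j) = A j := by
        intro j hj
        have hjIoo := Finset.mem_Ioo.mp (hsub' hj)
        ext ω
        simp only [Set.mem_preimage, hB, Set.mem_setOf_eq, A]
        constructor
        · intro h i h1 h2
          have hiM : i < M := lt_of_lt_of_le h2 (Aux.layerSum_mono a (by omega))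
          have hiS : (⟨i, hiM⟩ : Fin M) ∈ S :=
            Finset.mem_biUnion.mpr ⟨j, hj, (hTmem j _).mpr ⟨h1, h2⟩⟩
          exact h ⟨⟨i, hiM⟩, hiS⟩ ⟨h1, h2⟩
        · rintro h i ⟨h1, h2⟩
          exact h i.val.val h1 h2
      have hRpre : (⋂ j ∈ J', (A j)ᶜ) =
          (fun ω (i : {x // x ∈ S}) => f i.val ω) ⁻¹' (⋂ j ∈ J', (B j)ᶜ) := by
        rw [Set.preimage_iInter₂]
        exact (Set.iInter₂_congr fun j hj => by
          rw [Set.preimage_compl, hBpre j hj]).symm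
      have hRmeas : MeasurableSet (⋂ j ∈ J', (B j)ᶜ) :=
        MeasurableSet.biInter J'.countable_toSet (fun j _ => (hBmeas j).compl)
      have hmul : μ ((fun ω (i : {x // x ∈ T k}) => f i.val ω) ⁻¹' Csetᶜ ∩
            (fun ω (i : {x // x ∈ S}) => f i.val ω) ⁻¹' (⋂ j ∈ J', (B j)ᶜ)) =
          μ ((fun ω (i : {x // x ∈ T k}) => f i.val ω) ⁻¹' Csetᶜ) *
            μ ((fun ω (i : {x // x ∈ S}) => f i.val ω) ⁻¹' (⋂ j ∈ J', (B j)ᶜ)) :=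
        hIF.measure_inter_preimage_eq_mul Csetᶜ (⋂ j ∈ J', (B j)ᶜ) hCmeas.compl hRmeas
      have hAkc : (A k)ᶜ = (fun ω (i : {x // x ∈ T k}) => f i.val ω) ⁻¹' Csetᶜ := by
        rw [hAk, Set.preimage_compl]
      rw [Finset.set_biInter_insert, Finset.prod_insert hk, hAkc, hRpre, hmul, ← hAkc, ← hRpre,
        ih hsub']
      congr 1
      exact prob_compl_eq_one_sub (hAmeas k (by omega))
  -- probability bound for a single trajectory at time 0
  set q : ENNReal := (2⁻¹ : ENNReal) ^ (W * (W + 1)) with hq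
  set J : Finset ℕ := Finset.Ioo 1 D with hJ
  have hcardJ : J.card = D - 2 := by
    rw [hJ, Nat.card_Ioo]
    omega
  have hprodbound : μ (⋂ j ∈ J, (A j)ᶜ) ≤ (1 - q) ^ (D - 2) := by
    rw [key J (subset_refl J), ← hcardJ, ← Finset.prod_const]
    apply Finset.prod_le_prod'
    intro j hj
    have hjIoo := Finset.mem_Ioo.mp hj
    exact tsub_le_tsub_left (hAlow j (by omega) (by omega)) 1
  have hE1 : {ω | Inactive a D (Θ 1 0 ω)} = ⋃ j ∈ J, A j := by
    ext ω
    simp only [Set.mem_setOf_eq, Inactive, Set.mem_iUnion, Finset.mem_Ioo, hJ]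
    exact ⟨fun ⟨j, h1, h2, h3⟩ => ⟨j, ⟨h1, h2⟩, h3⟩, fun ⟨j, ⟨h1, h2⟩, h3⟩ => ⟨j, h1, h2, h3⟩⟩
  have hE1meas : MeasurableSet {ω | Inactive a D (Θ 1 0 ω)} := by
    rw [hE1]
    exact MeasurableSet.biUnion J.countable_toSet
      (fun j hj => hAmeas j (by have := Finset.mem_Ioo.mp hj; omega))
  have hE1low : 1 - (1 - q) ^ (D - 2) ≤ μ {ω | Inactive a D (Θ 1 0 ω)} := by
    have hcompl : {ω | Inactive a D (Θ 1 0 ω)}ᶜ = ⋂ j ∈ J, (A j)ᶜ := by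
      rw [hE1, Set.compl_iUnion₂]
    have h1 : μ ({ω | Inactive a D (Θ 1 0 ω)}ᶜ) ≤ (1 - q) ^ (D - 2) := by
      rw [hcompl]; exact hprodbound
    calc 1 - (1 - q) ^ (D - 2) ≤ 1 - μ ({ω | Inactive a D (Θ 1 0 ω)}ᶜ) :=
          tsub_le_tsub_left h1 1
      _ = μ {ω | Inactive a D (Θ 1 0 ω)} := by
          rw [prob_compl_eq_one_sub hE1meas,
            ENNReal.sub_sub_cancel ENNReal.one_ne_top prob_le_one]
  -- measurability of the inactive set on parameter space
  have hSmeas : MeasurableSet {θ : ℕ → ℝ | Inactive a D θ} := by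
    have hrw : {θ : ℕ → ℝ | Inactive a D θ} =
        ⋃ j, ⋃ (_ : 1 < j ∧ j < D), {θ : ℕ → ℝ | layerNeg a j θ} := by
      ext θ
      simp only [Set.mem_setOf_eq, Inactive, Set.mem_iUnion]
      exact ⟨fun ⟨j, h1, h2, h3⟩ => ⟨j, ⟨h1, h2⟩, h3⟩, fun ⟨j, ⟨h1, h2⟩, h3⟩ => ⟨j, h1, h2, h3⟩⟩
    rw [hrw]
    refine MeasurableSet.iUnion fun j => MeasurableSet.iUnion fun _ => ?_
    have hrw2 : {θ : ℕ → ℝ | layerNeg a j θ} =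
        ⋂ i, ⋂ (_ : layerSum a (j-1) ≤ i ∧ i < layerSum a j),
          (fun θ : ℕ → ℝ => θ i) ⁻¹' Set.Iio 0 := by
      ext θ
      simp only [Set.mem_setOf_eq, layerNeg, Set.mem_iInter, Set.mem_preimage, Set.mem_Iio,
        and_imp]
    rw [hrw2]
    exact MeasurableSet.iInter fun i => MeasurableSet.iInter fun _ =>
      measurable_pi_apply i measurableSet_Iio
  -- identical distribution across trajectories
  have hEn : ∀ n : Fin N, μ ((fun ω => Θ (n.val + 1) 0 ω) ⁻¹' {θ : ℕ → ℝ | Inactive a D θ}) =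
      μ {ω | Inactive a D (Θ 1 0 ω)} := by
    intro n
    exact (hident (n.val + 1) (by omega) (by have := n.isLt; omega)).measure_mem_eq hSmeas
  have hbig := hindep.measure_inter_preimage_eq_mul Finset.univ
    (sets := fun _ => {θ : ℕ → ℝ | Inactive a D θ}) (fun _ _ => hSmeas)
  -- inclusion into the target event
  have hsubset : (⋂ n ∈ Finset.univ (α := Fin N),
      (fun ω => Θ (n.val + 1) 0 ω) ⁻¹' {θ : ℕ → ℝ | Inactive a D θ}) ⊆
      {ω | ∀ n, 1 ≤ n → n ≤ N → ∀ t, Inactive a D (Θ n t ω)} := by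
    intro ω hω n hn1 hnN t
    simp only [Set.mem_iInter, Set.mem_preimage, Set.mem_setOf_eq] at hω
    have h0 : Inactive a D (Θ n 0 ω) := by
      have := hω ⟨n - 1, by omega⟩ (Finset.mem_univ _)
      simpa [show n - 1 + 1 = n by omega] using this
    exact preserveAll n ω h0 t
  -- conversion of the real bound to ENNReal
  have hhalfE : ENNReal.ofReal (1 / 2 : ℝ) = 2⁻¹ := by
    rw [show (1 / 2 : ℝ) = (2 : ℝ)⁻¹ by norm_num,
      ENNReal.ofReal_inv_of_pos (by norm_num), ENNReal.ofReal_ofNat]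
  have hr0 : (0 : ℝ) ≤ (1 / 2 : ℝ) ^ (W * (W + 1)) := by positivity
  have hr1 : (1 / 2 : ℝ) ^ (W * (W + 1)) ≤ 1 := pow_le_one₀ (by norm_num) (by norm_num)
  have hs0 : (0 : ℝ) ≤ (1 - (1 / 2 : ℝ) ^ (W * (W + 1))) ^ (D - 2) :=
    pow_nonneg (by linarith) _
  have hs1 : (1 - (1 / 2 : ℝ) ^ (W * (W + 1))) ^ (D - 2) ≤ 1 :=
    pow_le_one₀ (by linarith) (by linarith)
  have hconv : ENNReal.ofReal ((1 - (1 - (1 / 2 : ℝ) ^ (W * (W + 1))) ^ (D - 2)) ^ N) =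
      (1 - (1 - q) ^ (D - 2)) ^ N := by
    rw [ENNReal.ofReal_pow (by linarith) N, ENNReal.ofReal_sub _ hs0, ENNReal.ofReal_one,
      ENNReal.ofReal_pow (by linarith) (D - 2), ENNReal.ofReal_sub _ hr0, ENNReal.ofReal_one,
      ENNReal.ofReal_pow (by norm_num) (W * (W + 1)), hhalfE, hq]
  -- final chain
  calc ENNReal.ofReal ((1 - (1 - (1 / 2 : ℝ) ^ (W * (W + 1))) ^ (D - 2)) ^ N)
      = (1 - (1 - q) ^ (D - 2)) ^ N := hconv
    _ ≤ (μ {ω | Inactive a D (Θ 1 0 ω)}) ^ N := pow_le_pow_left' hE1low N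
    _ = ∏ _n ∈ Finset.univ (α := Fin N), μ {ω | Inactive a D (Θ 1 0 ω)} := by
        rw [Finset.prod_const, Finset.card_univ, Fintype.card_fin]
    _ = ∏ n ∈ Finset.univ (α := Fin N),
          μ ((fun ω => Θ (n.val + 1) 0 ω) ⁻¹' {θ : ℕ → ℝ | Inactive a D θ}) :=
        Finset.prod_congr rfl fun n _ => (hEn n).symm
    _ = μ (⋂ n ∈ Finset.univ (α := Fin N),
          (fun ω => Θ (n.val + 1) 0 ω) ⁻¹' {θ : ℕ → ℝ | Inactive a D θ}) := hbig.symm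
    _ ≤ μ {ω | ∀ n, 1 ≤ n → n ≤ N → ∀ t, Inactive a D (Θ n t ω)} := measure_mono hsubset
end
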